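/- For x, z ≥ 0 and y ∈ [0, π/2], the imaginary part of G(x, yi, z) equals −arctan(sinh(x)·sin(y)/(cosh(z) + cosh(x)·cos(y))), which equals the negative of the imaginary part of S(x, yi, z), where S(x, yi, z) = i·arctan(sinh(x)·sin(y)/(cosh(z) + cosh(x)·cos(y))). -/

import Mathlib

open Real Complex

/-- The gap function `G` (logarithmic form, principal branch complex logarithm). -/
noncomputable def G (x y z : ℂ) : ℂ :=
  Complex.log ((Complex.exp x + Complex.exp (y + z)) /
    (Complex.exp (-x) + Complex.exp (y + z)))

/-- Complex inverse hyperbolic tangent (principal branch, imaginary part in `(-π/2, π/2]`). -/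
noncomputable def artanhC (z : ℂ) : ℂ := (1/2) * Complex.log ((1 + z) / (1 - z))

/-- The projection function `S` of the complexified McShane identity. -/
noncomputable def S (x y z : ℂ) : ℂ :=
  artanhC (Complex.sinh x * Complex.sinh y / (Complex.cosh z + Complex.cosh x * Complex.cosh y))

lemma my_arg_eq_arctan {w : ℂ} (h : 0 < w.re) : w.arg = Real.arctan (w.im / w.re) := by
  rw [← Complex.tan_arg, Real.arctan_tan]
  · exact Complex.neg_pi_div_two_lt_arg_iff.2 (Or.inl h)
  · exact Complex.arg_lt_pi_div_two_iff.2 (Or.inl h)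

lemma my_artanhC (t : ℝ) (ht : 0 ≤ t) :
    artanhC ((t:ℂ) * Complex.I) = (Real.arctan t : ℂ) * Complex.I := by
  rw [artanhC]
  set θ := Real.arctan t with hθ
  have hθ1 : 0 ≤ θ := by
    rw [hθ, ← Real.arctan_zero]
    exact Real.arctan_strictMono.monotone ht
  have hθ2 : θ < π/2 := Real.arctan_lt_pi_div_two t
  have hcpos : 0 < Real.cos θ := Real.cos_pos_of_mem_Ioo ⟨by linarith [Real.pi_pos], hθ2⟩
  have htan : Real.sin θ / Real.cos θ = t := by
    rw [← Real.tan_eq_sin_div_cos]; exact Real.tan_arctan t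
  set c : ℂ := (Real.cos θ : ℂ) with hc
  set s : ℂ := (Real.sin θ : ℂ) with hs
  have htC : (t : ℂ) = s / c := by rw [hs, hc, ← Complex.ofReal_div, htan]
  have hcne : c ≠ 0 := by rw [hc]; exact_mod_cast hcpos.ne'
  have he1 : Complex.exp ((θ:ℂ) * Complex.I) = c + s * Complex.I := by
    rw [Complex.exp_mul_I, hc, hs, Complex.ofReal_cos, Complex.ofReal_sin]
  have he2 : Complex.exp (-(θ:ℂ) * Complex.I) = c - s * Complex.I := by
    rw [Complex.exp_mul_I, Complex.cos_neg, Complex.sin_neg, hc, hs,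
      Complex.ofReal_cos, Complex.ofReal_sin]; ring
  have h1 : 1 + (t:ℂ) * Complex.I = c⁻¹ * Complex.exp ((θ:ℂ) * Complex.I) := by
    rw [he1, htC]; field_simp
  have h2 : 1 - (t:ℂ) * Complex.I = c⁻¹ * Complex.exp (-(θ:ℂ) * Complex.I) := by
    rw [he2, htC]; field_simp
  rw [h1, h2, mul_div_mul_left _ _ (inv_ne_zero hcne), ← Complex.exp_sub]
  have h3 : (θ:ℂ) * Complex.I - -(θ:ℂ) * Complex.I = ((2*θ : ℝ):ℂ) * Complex.I := by
    push_cast; ring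
  rw [h3, Complex.log_exp]
  · push_cast; ring
  · simp; linarith [Real.pi_pos]
  · simp; linarith

theorem im_G_of_imaginary_y (x y z : ℝ) (hx : 0 ≤ x) (hz : 0 ≤ z)
    (hy : y ∈ Set.Icc 0 (π/2)) :
    (G (x : ℂ) ((y : ℂ) * Complex.I) (z : ℂ)).im =
        - Real.arctan (Real.sinh x * Real.sin y /
          (Real.cosh z + Real.cosh x * Real.cos y)) ∧
      S (x : ℂ) ((y : ℂ) * Complex.I) (z : ℂ) =
        ((Real.arctan (Real.sinh x * Real.sin y /
          (Real.cosh z + Real.cosh x * Real.cos y))) : ℂ) * Complex.I ∧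
      (G (x : ℂ) ((y : ℂ) * Complex.I) (z : ℂ)).im
        + (S (x : ℂ) ((y : ℂ) * Complex.I) (z : ℂ)).im = 0 := by
  obtain ⟨hy0, hy2⟩ := hy
  have hpi := Real.pi_pos
  have hcos : 0 ≤ Real.cos y := Real.cos_nonneg_of_mem_Icc ⟨by linarith, hy2⟩
  have hsin : 0 ≤ Real.sin y := Real.sin_nonneg_of_nonneg_of_le_pi hy0 (by linarith)
  have hd : 0 < Real.cosh z + Real.cosh x * Real.cos y := by
    have h1 : 1 ≤ Real.cosh z := Real.one_le_cosh z
    have h2 : 0 ≤ Real.cosh x * Real.cos y := mul_nonneg (Real.cosh_pos x).le hcos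
    linarith
  set t := Real.sinh x * Real.sin y / (Real.cosh z + Real.cosh x * Real.cos y) with htdef
  have ht : 0 ≤ t :=
    div_nonneg (mul_nonneg (Real.sinh_nonneg_iff.2 hx) hsin) hd.le
  -- the S part
  have hS : S (x : ℂ) ((y : ℂ) * Complex.I) (z : ℂ) = (Real.arctan t : ℂ) * Complex.I := by
    have harg : Complex.sinh (x:ℂ) * Complex.sinh ((y:ℂ)*Complex.I) /
        (Complex.cosh (z:ℂ) + Complex.cosh (x:ℂ) * Complex.cosh ((y:ℂ)*Complex.I))
        = (t:ℂ) * Complex.I := by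
      rw [Complex.sinh_mul_I, Complex.cosh_mul_I, htdef]
      push_cast
      ring
    rw [S, harg, my_artanhC t ht]
  -- component computations
  have hG : (G (x : ℂ) ((y : ℂ) * Complex.I) (z : ℂ)).im = - Real.arctan t := by
    rw [G, Complex.log_im]
    set N := Complex.exp (x:ℂ) + Complex.exp ((y:ℂ)*Complex.I + (z:ℂ)) with hN
    set D := Complex.exp (-(x:ℂ)) + Complex.exp ((y:ℂ)*Complex.I + (z:ℂ)) with hD
    have hNre : N.re = Real.exp x + Real.exp z * Real.cos y := by
      simp [hN, Complex.exp_re]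
    have hNim : N.im = Real.exp z * Real.sin y := by
      simp [hN, Complex.exp_im]
    have hDre : D.re = Real.exp (-x) + Real.exp z * Real.cos y := by
      simp [hD, Complex.exp_re]
    have hDim : D.im = Real.exp z * Real.sin y := by
      simp [hD, Complex.exp_im]
    have hA : 0 < Real.exp x + Real.exp z * Real.cos y :=
      add_pos_of_pos_of_nonneg (Real.exp_pos x) (mul_nonneg (Real.exp_pos z).le hcos)
    have hC : 0 < Real.exp (-x) + Real.exp z * Real.cos y :=
      add_pos_of_pos_of_nonneg (Real.exp_pos (-x)) (mul_nonneg (Real.exp_pos z).le hcos)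
    have hnsq : 0 < Complex.normSq D := by
      rw [Complex.normSq_apply, hDre, hDim]
      positivity
    -- auxiliary exp identities
    have hxx : Real.exp x * Real.exp (-x) = 1 := by rw [← Real.exp_add]; simp
    have hzz : Real.exp z * Real.exp (-z) = 1 := by rw [← Real.exp_add]; simp
    have hden2 : (Real.exp x + Real.exp z * Real.cos y) * (Real.exp (-x) + Real.exp z * Real.cos y)
        + (Real.exp z * Real.sin y) * (Real.exp z * Real.sin y)
        = 2 * Real.exp z * (Real.cosh z + Real.cosh x * Real.cos y) := by
      rw [Real.cosh_eq, Real.cosh_eq]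
      linear_combination Real.exp z * Real.exp z * Real.sin_sq_add_cos_sq y + hxx - hzz
    have hnum : (Real.exp z * Real.sin y) * (Real.exp (-x) + Real.exp z * Real.cos y)
        - (Real.exp x + Real.exp z * Real.cos y) * (Real.exp z * Real.sin y)
        = -(2 * Real.exp z * Real.sin y * Real.sinh x) := by
      rw [Real.sinh_eq]; ring
    have hX : (N / D).im = -(2 * Real.exp z * Real.sin y * Real.sinh x) / Complex.normSq D := by
      rw [Complex.div_im, hNre, hNim, hDre, hDim, div_sub_div_same, hnum]
    have hY : (N / D).re = 2 * Real.exp z * (Real.cosh z + Real.cosh x * Real.cos y)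
        / Complex.normSq D := by
      rw [Complex.div_re, hNre, hNim, hDre, hDim, ← add_div, hden2]
    have hwre : 0 < (N / D).re := by
      rw [hY]
      have := Real.exp_pos z
      positivity
    rw [my_arg_eq_arctan hwre, hX, hY]
    have hre : -(2 * Real.exp z * Real.sin y * Real.sinh x) / Complex.normSq D /
        (2 * Real.exp z * (Real.cosh z + Real.cosh x * Real.cos y) / Complex.normSq D) = -t := by
      rw [div_div_div_cancel_right₀, htdef]
      · rw [neg_div, neg_inj]
        rw [div_eq_div_iff (by have := Real.exp_pos z; positivity) hd.ne']
        ring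
      · exact hnsq.ne'
    rw [hre, Real.arctan_neg]
  refine ⟨hG, hS, ?_⟩
  rw [hG, hS]
  simp only [Complex.mul_im, Complex.ofReal_re, Complex.ofReal_im, Complex.I_re, Complex.I_im]
  ring
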